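/- Let 1 ≤ p < ∞. There exists a universal constant C_p > 0 such that for every λ > 1 there is δ > 0 with the following property: for every nonempty finite set Y, every positive integer n with |Y| ≤ δn, and every real M ≥ 1, the number of points x ∈ ℤ^Y with ‖x‖_p ≤ M·n^{1/p} is at most C_p λⁿ M^{|Y|}. -/

import Mathlib

/-!
STATEMENT 15: For `1 ≤ p < ∞` there is a universal constant `C_p > 0` such that for every
`λ > 1` there is `δ > 0` so that for every nonempty finite set `Y`, every positive
integer `n` with `|Y| ≤ δn`, and every `M ≥ 1`, the number of `x ∈ ℤ^Y` with
`‖x‖_p ≤ M·n^{1/p}` is at most `C_p λ^n M^{|Y|}`.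
-/

universe u


lemma aux_geom {t : ℝ} (ht : 0 < t) (ht1 : t ≤ 1) (N : ℕ) :
    ∑ j ∈ Finset.range N, Real.exp (-t) ^ j ≤ 2 / t := by
  set r := Real.exp (-t) with hr
  have hr0 : 0 < r := Real.exp_pos _
  have hrle : r ≤ 1 - t / 2 := by
    have h1 : t + 1 ≤ Real.exp t := Real.add_one_le_exp t
    have h2 : r = (Real.exp t)⁻¹ := by rw [hr, ← Real.exp_neg]
    have h3 : r ≤ (1 + t)⁻¹ := by
      rw [h2]
      apply inv_anti₀ (by linarith) (by linarith)
    have h4 : (1 + t)⁻¹ ≤ 1 - t / 2 := by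
      rw [inv_le_iff_one_le_mul₀ (by linarith)]
      nlinarith
    linarith
  have hr1 : r < 1 := by linarith
  have hne : r ≠ 1 := ne_of_lt hr1
  rw [geom_sum_eq hne]
  have hrN : 0 ≤ r ^ N := by positivity
  have h5 : (r ^ N - 1) / (r - 1) = (1 - r ^ N) / (1 - r) := by
    rw [div_eq_div_iff (by linarith) (by linarith)]; ring
  rw [h5]
  rw [div_le_div_iff₀ (by linarith) ht]
  nlinarith



lemma aux_inner {t : ℝ} (ht : 0 < t) (ht1 : t ≤ 1) (K : ℤ) :
    ∑ m ∈ Finset.Icc (-K) K, Real.exp (-(t * |(m : ℝ)|)) ≤ 4 / t := by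
  rcases lt_or_ge K 0 with hK | hK
  · rw [Finset.Icc_eq_empty (by omega)]
    simp only [Finset.sum_empty]
    positivity
  · set N := K.toNat + 1 with hN
    have hval : ∀ m : ℤ, Real.exp (-(t * |(m : ℝ)|)) = Real.exp (-t) ^ m.natAbs := by
      intro m
      rw [← Real.exp_nat_mul]
      congr 1
      push_cast [Nat.cast_natAbs, Int.cast_abs]
      ring
    have hsub : Finset.Icc (-K) K ⊆ Finset.Icc (-K) (-1) ∪ Finset.Icc 0 K := by
      intro m hm
      simp only [Finset.mem_union, Finset.mem_Icc] at *
      omega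
    have hnn : ∀ m ∈ Finset.Icc (-K) (-1) ∪ Finset.Icc 0 K, m ∉ Finset.Icc (-K) K →
        0 ≤ Real.exp (-(t * |(m : ℝ)|)) := fun _ _ _ => (Real.exp_pos _).le
    refine le_trans (Finset.sum_le_sum_of_subset_of_nonneg hsub hnn) ?_
    have hdisj : Disjoint (Finset.Icc (-K) (-1)) (Finset.Icc 0 K) := by
      simp only [Finset.disjoint_left, Finset.mem_Icc]
      intro m h1 h2
      omega
    rw [Finset.sum_union hdisj]
    have h2 : ∑ m ∈ Finset.Icc 0 K, Real.exp (-(t * |(m : ℝ)|))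
        ≤ ∑ j ∈ Finset.range N, Real.exp (-t) ^ j := by
      rw [show ∑ m ∈ Finset.Icc 0 K, Real.exp (-(t * |(m : ℝ)|))
          = ∑ m ∈ Finset.Icc 0 K, Real.exp (-t) ^ m.natAbs from
        Finset.sum_congr rfl fun m _ => hval m]
      refine le_of_eq (Finset.sum_nbij' (fun m => m.natAbs) (fun j => (j : ℤ)) ?_ ?_ ?_ ?_ ?_)
      · intro a ha; simp only [Finset.mem_Icc] at ha; simp only [Finset.mem_range]; omega
      · intro a ha; simp only [Finset.mem_range] at ha; simp only [Finset.mem_Icc]; omega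
      · intro a ha; simp only [Finset.mem_Icc] at ha
        show ((a.natAbs : ℤ)) = a; omega
      · intro a ha; simp
      · intro a ha; rfl
    have h1 : ∑ m ∈ Finset.Icc (-K) (-1), Real.exp (-(t * |(m : ℝ)|))
        ≤ ∑ j ∈ Finset.range N, Real.exp (-t) ^ j := by
      rw [show ∑ m ∈ Finset.Icc (-K) (-1), Real.exp (-(t * |(m : ℝ)|))
          = ∑ m ∈ Finset.Icc (-K) (-1), Real.exp (-t) ^ m.natAbs from
        Finset.sum_congr rfl fun m _ => hval m]
      have : ∑ m ∈ Finset.Icc (-K) (-1), Real.exp (-t) ^ m.natAbs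
          = ∑ j ∈ Finset.Icc 1 K.toNat, Real.exp (-t) ^ j := by
        refine Finset.sum_nbij' (fun m => m.natAbs) (fun j => -(j : ℤ)) ?_ ?_ ?_ ?_ ?_
        · intro a ha; simp only [Finset.mem_Icc] at *; omega
        · intro a ha; simp only [Finset.mem_Icc] at *; omega
        · intro a ha; simp only [Finset.mem_Icc] at ha
          show -((a.natAbs : ℤ)) = a; omega
        · intro a ha; simp
        · intro a ha; rfl
      rw [this]
      refine Finset.sum_le_sum_of_subset_of_nonneg ?_ (fun _ _ _ => by positivity)
      intro j hj
      simp only [Finset.mem_Icc] at hj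
      simp only [Finset.mem_range]
      omega
    have hgeom := aux_geom ht ht1 N
    have : (4:ℝ) / t = 2/t + 2/t := by ring
    rw [this]
    exact add_le_add (h1.trans hgeom) (h2.trans hgeom)




lemma aux_count (Y : Type u) [Fintype Y] {t : ℝ} (R : ℝ) (ht : 0 < t) (ht1 : t ≤ 1) :
    (Nat.card {z : Y → ℤ // ∑ y : Y, |((z y : ℤ) : ℝ)| ≤ R} : ℝ)
      ≤ Real.exp (t * R) * (4 / t) ^ (Fintype.card Y) := by
  classical
  set K : ℤ := ⌈R⌉ with hK
  set B : Finset (Y → ℤ) := Fintype.piFinset (fun _ : Y => Finset.Icc (-K) K) with hB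
  have hmemB : ∀ z : Y → ℤ, (∑ y : Y, |((z y : ℤ) : ℝ)| ≤ R) → z ∈ B := by
    intro z hz
    rw [hB, Fintype.mem_piFinset]
    intro y
    have h1 : |((z y : ℤ) : ℝ)| ≤ R := by
      refine le_trans ?_ hz
      exact Finset.single_le_sum (f := fun y => |((z y : ℤ) : ℝ)|)
        (fun _ _ => abs_nonneg _) (Finset.mem_univ y)
    have h2 : ((|z y| : ℤ) : ℝ) ≤ (K : ℝ) := by
      rw [Int.cast_abs]
      exact h1.trans (Int.le_ceil R)
    have h3 : |z y| ≤ K := by exact_mod_cast h2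
    rw [Finset.mem_Icc]
    exact abs_le.mp h3
  set F : Finset (Y → ℤ) := B.filter (fun z => ∑ y : Y, |((z y : ℤ) : ℝ)| ≤ R) with hF
  -- step 1 : Nat.card ≤ F.card
  have step1 : (Nat.card {z : Y → ℤ // ∑ y : Y, |((z y : ℤ) : ℝ)| ≤ R}) ≤ F.card := by
    have : Nat.card {z : Y → ℤ // z ∈ F} = F.card := by
      simp [Nat.card_eq_fintype_card]
    rw [← this]
    apply Nat.card_le_card_of_injective
      (fun z => (⟨z.1, by rw [hF, Finset.mem_filter]; exact ⟨hmemB z.1 z.2, z.2⟩⟩ :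
        {z : Y → ℤ // z ∈ F}))
    intro a b hab
    exact Subtype.ext (by simpa [Subtype.ext_iff] using hab)
  -- step 2 : F.card ≤ weighted sum over F
  have step2 : (F.card : ℝ) ≤ ∑ z ∈ F, Real.exp (t * (R - ∑ y : Y, |((z y : ℤ) : ℝ)|)) := by
    have := Finset.card_nsmul_le_sum F
      (fun z => Real.exp (t * (R - ∑ y : Y, |((z y : ℤ) : ℝ)|))) 1 ?_
    · simpa using this
    · intro z hz
      rw [hF, Finset.mem_filter] at hz
      have : 0 ≤ t * (R - ∑ y : Y, |((z y : ℤ) : ℝ)|) := by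
        apply mul_nonneg ht.le
        linarith [hz.2]
      exact Real.one_le_exp this
  -- step 3 : extend to B
  have step3 : ∑ z ∈ F, Real.exp (t * (R - ∑ y : Y, |((z y : ℤ) : ℝ)|))
      ≤ ∑ z ∈ B, Real.exp (t * (R - ∑ y : Y, |((z y : ℤ) : ℝ)|)) := by
    apply Finset.sum_le_sum_of_subset_of_nonneg (Finset.filter_subset _ _)
    intro _ _ _
    exact (Real.exp_pos _).le
  -- step 4 : factorize
  have step4 : ∑ z ∈ B, Real.exp (t * (R - ∑ y : Y, |((z y : ℤ) : ℝ)|))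
      = Real.exp (t * R) * ∏ y : Y, ∑ m ∈ Finset.Icc (-K) K, Real.exp (-(t * |(m : ℝ)|)) := by
    rw [Finset.prod_univ_sum]
    rw [Finset.mul_sum]
    apply Finset.sum_congr rfl
    intro z hz
    rw [← Real.exp_sum, ← Real.exp_add]
    congr 1
    have : ∑ x : Y, -(t * |((z x : ℤ) : ℝ)|) = -(t * ∑ y : Y, |((z y : ℤ) : ℝ)|) := by
      rw [Finset.mul_sum, ← Finset.sum_neg_distrib]
    rw [this]
    ring
  -- step 5 : inner product bound
  have step5 : ∏ y : Y, ∑ m ∈ Finset.Icc (-K) K, Real.exp (-(t * |(m : ℝ)|))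
      ≤ (4 / t) ^ (Fintype.card Y) := by
    calc ∏ y : Y, ∑ m ∈ Finset.Icc (-K) K, Real.exp (-(t * |(m : ℝ)|))
        ≤ ∏ _y : Y, (4 / t : ℝ) :=
          Finset.prod_le_prod (fun _ _ => by positivity) (fun _ _ => aux_inner ht ht1 K)
      _ = (4 / t) ^ (Fintype.card Y) := by rw [Finset.prod_const, Finset.card_univ]
  calc (Nat.card {z : Y → ℤ // ∑ y : Y, |((z y : ℤ) : ℝ)| ≤ R} : ℝ)
      ≤ (F.card : ℝ) := by exact_mod_cast step1
    _ ≤ ∑ z ∈ F, Real.exp (t * (R - ∑ y : Y, |((z y : ℤ) : ℝ)|)) := step2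
    _ ≤ ∑ z ∈ B, Real.exp (t * (R - ∑ y : Y, |((z y : ℤ) : ℝ)|)) := step3
    _ = Real.exp (t * R) * ∏ y : Y, ∑ m ∈ Finset.Icc (-K) K, Real.exp (-(t * |(m : ℝ)|)) := step4
    _ ≤ Real.exp (t * R) * (4 / t) ^ (Fintype.card Y) := by
        apply mul_le_mul_of_nonneg_left step5 (Real.exp_pos _).le


lemma aux_finite (Y : Type u) [Fintype Y] (R : ℝ) :
    Finite {z : Y → ℤ // ∑ y : Y, |((z y : ℤ) : ℝ)| ≤ R} := by
  classical
  set K : ℤ := ⌈R⌉ with hK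
  apply Finite.of_injective (β := Y → (Finset.Icc (-K) K : Finset ℤ))
    (fun z => fun y => ⟨z.1 y, by
      rw [Finset.mem_Icc]
      apply abs_le.mp
      have h1 : |((z.1 y : ℤ) : ℝ)| ≤ R := by
        refine le_trans ?_ z.2
        exact Finset.single_le_sum (f := fun y => |((z.1 y : ℤ) : ℝ)|)
          (fun _ _ => abs_nonneg _) (Finset.mem_univ y)
      have h2 : ((|z.1 y| : ℤ) : ℝ) ≤ (K : ℝ) := by
        rw [Int.cast_abs]
        exact h1.trans (Int.le_ceil R)
      exact_mod_cast h2⟩)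
  intro a b hab
  apply Subtype.ext
  funext y
  exact Subtype.ext_iff.mp (congrFun hab y)





set_option maxHeartbeats 1000000 in
theorem stmt15 (p : ℝ) (hp : 1 ≤ p) :
    ∃ C : ℝ, 0 < C ∧ ∀ lam : ℝ, 1 < lam → ∃ δ : ℝ, 0 < δ ∧
      ∀ (Y : Type u) [Fintype Y], Nonempty Y →
        ∀ n : ℕ, 0 < n → (Fintype.card Y : ℝ) ≤ δ * n →
          ∀ M : ℝ, 1 ≤ M →
            (Nat.card {x : Y → ℤ //
                (∑ y : Y, |(x y : ℝ)| ^ p) ^ (1 / p) ≤ M * (n : ℝ) ^ (1 / p)} : ℝ)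
              ≤ C * lam ^ n * M ^ Fintype.card Y := by
  classical
  have hp0 : (0:ℝ) < p := lt_of_lt_of_le one_pos hp
  refine ⟨1, one_pos, ?_⟩
  intro lam hlam
  set L := Real.log lam with hLdef
  have hL : 0 < L := Real.log_pos hlam
  set c : ℝ := (2:ℝ) ^ (p + 1) with hcdef
  have hc1 : (1:ℝ) ≤ c := by
    rw [hcdef]
    calc (1:ℝ) = (2:ℝ) ^ (0:ℝ) := (Real.rpow_zero 2).symm
      _ ≤ (2:ℝ) ^ (p+1) := Real.rpow_le_rpow_of_exponent_le one_le_two (by linarith)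
  have hc0 : (0:ℝ) < c := lt_of_lt_of_le one_pos hc1
  set t : ℝ := min 1 (L / (2 * c)) with htdef
  have ht : 0 < t := lt_min one_pos (by positivity)
  have ht1 : t ≤ 1 := min_le_left _ _
  have htc : t * c ≤ L / 2 := by
    have h := min_le_right 1 (L / (2 * c))
    calc t * c ≤ (L / (2 * c)) * c := mul_le_mul_of_nonneg_right h hc0.le
      _ = L / 2 := by field_simp
  have h8t : (1:ℝ) < 8 / t := by
    rw [lt_div_iff₀ ht]; linarith
  have hlog8 : 0 < Real.log (8 / t) := Real.log_pos h8t
  refine ⟨min 1 (L / (2 * Real.log (8 / t))), lt_min one_pos (by positivity), ?_⟩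
  intro Y _ _ n hn hdn M hM
  set d := Fintype.card Y with hd
  have hn0 : (0:ℝ) ≤ (n:ℝ) := Nat.cast_nonneg n
  have hdn1 : (d:ℝ) ≤ n := by
    refine le_trans hdn ?_
    have h := min_le_left 1 (L / (2 * Real.log (8 / t)))
    nlinarith
  have hdn2 : (d:ℝ) * Real.log (8 / t) ≤ L / 2 * n := by
    have hδ2 : min 1 (L / (2 * Real.log (8 / t))) ≤ L / (2 * Real.log (8 / t)) :=
      min_le_right _ _
    have h1 : (d:ℝ) ≤ L / (2 * Real.log (8 / t)) * n :=
      le_trans hdn (mul_le_mul_of_nonneg_right hδ2 hn0)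
    calc (d:ℝ) * Real.log (8 / t)
        ≤ (L / (2 * Real.log (8 / t)) * n) * Real.log (8 / t) :=
          mul_le_mul_of_nonneg_right h1 hlog8.le
      _ = L / 2 * n := by field_simp
  have hM0 : (0:ℝ) < M := lt_of_lt_of_le one_pos hM
  set m : ℕ := ⌈M⌉₊ with hmdef
  have hm1 : 1 ≤ m := Nat.one_le_ceil_iff.mpr hM0
  have hMm : M ≤ (m:ℝ) := Nat.le_ceil M
  have hm0 : (0:ℝ) < (m:ℝ) := lt_of_lt_of_le hM0 hMm
  have hmZ : (0:ℤ) < (m:ℤ) := by exact_mod_cast hm1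
  have hm2M : (m:ℝ) ≤ 2 * M := by
    have := Nat.ceil_lt_add_one hM0.le
    linarith
  set R : ℝ := c * n with hRdef
  haveI : Finite {z : Y → ℤ // ∑ y : Y, |((z y : ℤ) : ℝ)| ≤ R} := aux_finite Y R
  -- pointwise |w| ≤ |w|^p for integers
  have habs : ∀ w : ℤ, |((w : ℤ) : ℝ)| ≤ |((w : ℤ) : ℝ)| ^ p := by
    intro w
    rcases eq_or_ne w 0 with h | h
    · simp [h, Real.zero_rpow (ne_of_gt hp0)]
    · have h1 : (1:ℝ) ≤ |((w : ℤ) : ℝ)| := by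
        have h2 : (1:ℤ) ≤ |w| := by
          rcases lt_or_gt_of_ne h with hneg | hpos
          · rw [abs_of_neg hneg]; omega
          · rw [abs_of_pos hpos]; omega
        have h3 : ((1:ℤ):ℝ) ≤ ((|w|:ℤ):ℝ) := by exact_mod_cast h2
        rwa [Int.cast_abs, Int.cast_one] at h3
      calc |((w : ℤ) : ℝ)| = |((w : ℤ) : ℝ)| ^ (1:ℝ) := (Real.rpow_one _).symm
        _ ≤ |((w : ℤ) : ℝ)| ^ p := Real.rpow_le_rpow_of_exponent_le h1 hp
  set S := {x : Y → ℤ //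
      (∑ y : Y, |(x y : ℝ)| ^ p) ^ (1 / p) ≤ M * (n : ℝ) ^ (1 / p)} with hSdef
  have hip : 1 / p * p = 1 := by field_simp
  have hmemT : ∀ x : S, ∑ y : Y, |(((x.1 y / (m:ℤ)) : ℤ) : ℝ)| ≤ R := by
    intro x
    have hsum0 : 0 ≤ ∑ y : Y, |(x.1 y : ℝ)| ^ p :=
      Finset.sum_nonneg fun _ _ => Real.rpow_nonneg (abs_nonneg _) p
    have hA : ∑ y : Y, |(x.1 y : ℝ)| ^ p ≤ M ^ p * n := by
      have h1 := Real.rpow_le_rpow (Real.rpow_nonneg hsum0 _) x.2 hp0.le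
      rwa [← Real.rpow_mul hsum0, hip, Real.rpow_one,
        Real.mul_rpow hM0.le (Real.rpow_nonneg hn0 _),
        ← Real.rpow_mul hn0, hip, Real.rpow_one] at h1
    -- per coordinate |z_y| ≤ |x_y|/m + 1
    have hz1 : ∀ y : Y, |(((x.1 y / (m:ℤ)) : ℤ) : ℝ)| ≤ |(x.1 y : ℝ)| / m + 1 := by
      intro y
      have hr0 : 0 ≤ x.1 y % (m:ℤ) := Int.emod_nonneg _ hmZ.ne'
      have hrm : x.1 y % (m:ℤ) < (m:ℤ) := Int.emod_lt_of_pos _ hmZ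
      have hkey : (m:ℤ) * (x.1 y / (m:ℤ)) = x.1 y - x.1 y % (m:ℤ) := by
        have := Int.mul_ediv_add_emod (x.1 y) (m:ℤ)
        omega
      have hzint : (m:ℤ) * |x.1 y / (m:ℤ)| ≤ |x.1 y| + (m:ℤ) := by
        have h2 : |(m:ℤ) * (x.1 y / (m:ℤ))| ≤ |x.1 y| + (m:ℤ) := by
          rw [hkey]
          calc |x.1 y - x.1 y % (m:ℤ)| ≤ |x.1 y| + |x.1 y % (m:ℤ)| := abs_sub _ _
            _ ≤ |x.1 y| + (m:ℤ) := by rw [abs_of_nonneg hr0]; omega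
        rwa [abs_mul, abs_of_nonneg hmZ.le] at h2
      have hcast : (m:ℝ) * |(((x.1 y / (m:ℤ)) : ℤ) : ℝ)| ≤ |(x.1 y : ℝ)| + m := by
        exact_mod_cast hzint
      have h4 : |(((x.1 y / (m:ℤ)) : ℤ) : ℝ)| ≤ (|(x.1 y : ℝ)| + m) / m := by
        rw [le_div_iff₀ hm0]
        linarith [hcast]
      calc |(((x.1 y / (m:ℤ)) : ℤ) : ℝ)| ≤ (|(x.1 y : ℝ)| + m) / m := h4
        _ = |(x.1 y : ℝ)| / m + 1 := by field_simp
    -- per coordinate p-th power bound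
    have hz2 : ∀ y : Y, |(((x.1 y / (m:ℤ)) : ℤ) : ℝ)| ^ p
        ≤ (2:ℝ) ^ p * (|(x.1 y : ℝ)| ^ p / (m:ℝ) ^ p + 1) := by
      intro y
      set a := |(x.1 y : ℝ)| with ha
      have ha0 : 0 ≤ a := abs_nonneg _
      have hb0 : 0 ≤ |(((x.1 y / (m:ℤ)) : ℤ) : ℝ)| := abs_nonneg _
      have hdiv0 : 0 ≤ a / m := by positivity
      have hdivpow : (a / m) ^ p = a ^ p / (m:ℝ) ^ p := Real.div_rpow ha0 hm0.le p
      have h2p : (0:ℝ) < (2:ℝ) ^ p := Real.rpow_pos_of_pos two_pos p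
      have hdp0 : 0 ≤ (a / m) ^ p := Real.rpow_nonneg hdiv0 p
      rcases le_total (a / m) 1 with hcase | hcase
      · have hb2 : |(((x.1 y / (m:ℤ)) : ℤ) : ℝ)| ≤ 2 := by
          have := hz1 y; rw [← ha] at this; linarith
        calc |(((x.1 y / (m:ℤ)) : ℤ) : ℝ)| ^ p ≤ (2:ℝ) ^ p :=
              Real.rpow_le_rpow hb0 hb2 hp0.le
          _ ≤ (2:ℝ) ^ p * (a ^ p / (m:ℝ) ^ p + 1) := by
              rw [← hdivpow]
              exact le_mul_of_one_le_right h2p.le (by linarith [hdp0])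
      · have hb2 : |(((x.1 y / (m:ℤ)) : ℤ) : ℝ)| ≤ 2 * (a / m) := by
          have := hz1 y; rw [← ha] at this; linarith
        calc |(((x.1 y / (m:ℤ)) : ℤ) : ℝ)| ^ p ≤ (2 * (a / m)) ^ p :=
              Real.rpow_le_rpow hb0 hb2 hp0.le
          _ = (2:ℝ) ^ p * (a / m) ^ p := Real.mul_rpow (by norm_num) hdiv0
          _ ≤ (2:ℝ) ^ p * (a ^ p / (m:ℝ) ^ p + 1) := by
              rw [← hdivpow]
              exact mul_le_mul_of_nonneg_left (by linarith [hdp0]) h2p.le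
    -- sum the p-th powers
    have hmp : (0:ℝ) < (m:ℝ) ^ p := Real.rpow_pos_of_pos hm0 p
    have hMp : M ^ p ≤ (m:ℝ) ^ p := Real.rpow_le_rpow hM0.le hMm hp0.le
    have hsump : ∑ y : Y, |(((x.1 y / (m:ℤ)) : ℤ) : ℝ)| ^ p ≤ R := by
      calc ∑ y : Y, |(((x.1 y / (m:ℤ)) : ℤ) : ℝ)| ^ p
          ≤ ∑ y : Y, (2:ℝ) ^ p * (|(x.1 y : ℝ)| ^ p / (m:ℝ) ^ p + 1) :=
            Finset.sum_le_sum fun y _ => hz2 y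
        _ = (2:ℝ) ^ p * ((∑ y : Y, |(x.1 y : ℝ)| ^ p) / (m:ℝ) ^ p + d) := by
            rw [← Finset.mul_sum, Finset.sum_add_distrib, ← Finset.sum_div,
              Finset.sum_const, Finset.card_univ]
            simp [hd]
        _ ≤ (2:ℝ) ^ p * ((M ^ p * n) / (m:ℝ) ^ p + d) := by
            have h2p : (0:ℝ) ≤ (2:ℝ) ^ p := (Real.rpow_pos_of_pos two_pos p).le
            have h5 : (∑ y : Y, |(x.1 y : ℝ)| ^ p) / (m:ℝ) ^ p ≤ (M ^ p * n) / (m:ℝ) ^ p := by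
              gcongr
            exact mul_le_mul_of_nonneg_left (by linarith) h2p
        _ ≤ (2:ℝ) ^ p * ((n:ℝ) + n) := by
            have h2p : (0:ℝ) ≤ (2:ℝ) ^ p := (Real.rpow_pos_of_pos two_pos p).le
            have h6 : (M ^ p * n) / (m:ℝ) ^ p ≤ n := by
              rw [div_le_iff₀ hmp]
              nlinarith
            exact mul_le_mul_of_nonneg_left (by linarith) h2p
        _ = R := by
            rw [hRdef, hcdef, Real.rpow_add two_pos, Real.rpow_one]
            ring
    calc ∑ y : Y, |(((x.1 y / (m:ℤ)) : ℤ) : ℝ)| ≤ ∑ y : Y, |(((x.1 y / (m:ℤ)) : ℤ) : ℝ)| ^ p :=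
          Finset.sum_le_sum fun y _ => habs _
      _ ≤ R := hsump
  -- the injection into T × (Y → Fin m)
  have hmfin : 0 < m := hm1
  set T := {z : Y → ℤ // ∑ y : Y, |((z y : ℤ) : ℝ)| ≤ R} with hTdef
  have hcard1 : Nat.card S ≤ Nat.card (T × (Y → Fin m)) := by
    apply Nat.card_le_card_of_injective
      (f := fun x : S => ((⟨fun y => x.1 y / (m:ℤ), hmemT x⟩ : T),
        fun y => (⟨(x.1 y % (m:ℤ)).toNat, by
          have h1 : x.1 y % (m:ℤ) < (m:ℤ) := Int.emod_lt_of_pos _ hmZ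
          have h2 : 0 ≤ x.1 y % (m:ℤ) := Int.emod_nonneg _ hmZ.ne'
          omega⟩ : Fin m)))
    intro a b hab
    rw [Prod.ext_iff] at hab
    obtain ⟨h1, h2⟩ := hab
    apply Subtype.ext
    funext y
    have hdiv : a.1 y / (m:ℤ) = b.1 y / (m:ℤ) := congrFun (Subtype.ext_iff.mp h1) y
    have hmodn : (a.1 y % (m:ℤ)).toNat = (b.1 y % (m:ℤ)).toNat :=
      congrArg Fin.val (congrFun h2 y)
    have h2a : 0 ≤ a.1 y % (m:ℤ) := Int.emod_nonneg _ hmZ.ne'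
    have h2b : 0 ≤ b.1 y % (m:ℤ) := Int.emod_nonneg _ hmZ.ne'
    have hmod : a.1 y % (m:ℤ) = b.1 y % (m:ℤ) := by omega
    calc a.1 y = (m:ℤ) * (a.1 y / (m:ℤ)) + a.1 y % (m:ℤ) := (Int.mul_ediv_add_emod _ _).symm
      _ = (m:ℤ) * (b.1 y / (m:ℤ)) + b.1 y % (m:ℤ) := by rw [hdiv, hmod]
      _ = b.1 y := Int.mul_ediv_add_emod _ _
  have hcard2 : Nat.card (T × (Y → Fin m)) = Nat.card T * m ^ d := by
    rw [Nat.card_prod]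
    congr 1
    rw [Nat.card_eq_fintype_card, Fintype.card_fun, Fintype.card_fin]
  -- real-valued chain
  have haux := aux_count Y (t := t) R ht ht1
  have h2p0 : (0:ℝ) < 4 / t := by positivity
  have hcards : (Nat.card S : ℝ) ≤ Real.exp (t * R) * (4 / t) ^ d * (m:ℝ) ^ d := by
    have hc3 : (Nat.card S : ℝ) ≤ (Nat.card T : ℝ) * (m:ℝ) ^ d := by
      have := hcard1.trans_eq hcard2
      exact_mod_cast this
    refine hc3.trans ?_
    exact mul_le_mul_of_nonneg_right haux (by positivity)
  have hexp1 : Real.exp (t * R) ≤ Real.exp (L / 2 * n) := by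
    apply Real.exp_le_exp.mpr
    rw [hRdef]
    calc t * (c * n) = (t * c) * n := by ring
      _ ≤ (L / 2) * n := mul_le_mul_of_nonneg_right htc hn0
  have hexp2 : ((8:ℝ) / t) ^ d ≤ Real.exp (L / 2 * n) := by
    have h8 : (8:ℝ) / t = Real.exp (Real.log (8 / t)) := (Real.exp_log (by positivity)).symm
    rw [h8, ← Real.exp_nat_mul]
    exact Real.exp_le_exp.mpr hdn2
  have hmd : (m:ℝ) ^ d ≤ (2 * M) ^ d := pow_le_pow_left₀ hm0.le hm2M d
  have hMd0 : (0:ℝ) ≤ M ^ d := by positivity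
  calc (Nat.card S : ℝ) ≤ Real.exp (t * R) * (4 / t) ^ d * (m:ℝ) ^ d := hcards
    _ ≤ Real.exp (t * R) * (4 / t) ^ d * (2 * M) ^ d := by
        apply mul_le_mul_of_nonneg_left hmd (by positivity)
    _ = Real.exp (t * R) * ((8 / t) ^ d * M ^ d) := by
        rw [mul_pow, ← mul_assoc, mul_assoc (Real.exp (t*R)), ← mul_pow, ← mul_pow]
        norm_num
        ring_nf
    _ ≤ Real.exp (L / 2 * n) * ((8 / t) ^ d * M ^ d) := by
        apply mul_le_mul_of_nonneg_right hexp1 (by positivity)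
    _ ≤ Real.exp (L / 2 * n) * (Real.exp (L / 2 * n) * M ^ d) := by
        apply mul_le_mul_of_nonneg_left (mul_le_mul_of_nonneg_right hexp2 hMd0)
          (Real.exp_pos _).le
    _ = Real.exp ((n:ℕ) * L) * M ^ d := by
        rw [← mul_assoc, ← Real.exp_add]
        ring_nf
    _ = lam ^ n * M ^ d := by
        rw [Real.exp_nat_mul, hLdef, Real.exp_log (lt_trans one_pos hlam)]
    _ = 1 * lam ^ n * M ^ d := by ring
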